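/- For any real number α and any ε > 0, the set R = {n ∈ ℕ : ‖n³α‖ < ε} is Δ₂*: for every strictly increasing sequence (n_k)_{k∈ℕ} in ℕ there exist k₁ < k₂ < k₃ < k₄ with (n_{k₄} − n_{k₃}) − (n_{k₂} − n_{k₁}) ∈ ℕ and ‖((n_{k₄} − n_{k₃}) − (n_{k₂} − n_{k₁}))³ α‖ < ε. -/

import Mathlib

open Filter Set

namespace CubicAux

/-! Auxiliary infinite Ramsey machinery via an ultrafilter extending the cofinite filter. -/

variable (U : Ultrafilter ℕ)

lemma mem_of_compl_finite (hU : (U : Filter ℕ) ≤ cofinite) {s : Set ℕ} (hs : sᶜ.Finite) :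
    s ∈ U :=
  hU (Filter.mem_cofinite.mpr hs)

lemma mem_gt (hU : (U : Filter ℕ) ≤ cofinite) (a : ℕ) : {x : ℕ | a < x} ∈ U := by
  apply mem_of_compl_finite U hU
  apply (Set.finite_Iic a).subset
  intro x hx
  simp only [Set.mem_compl_iff, Set.mem_setOf_eq, not_lt] at hx
  simpa using hx

lemma exists_fiber {κ : Type} [Fintype κ] (f : ℕ → κ) : ∃ c, {x | f x = c} ∈ U := by
  by_contra h
  push_neg at h
  have h2 : ∀ c : κ, {x | f x = c}ᶜ ∈ U := fun c =>
    (Ultrafilter.compl_mem_iff_notMem).mpr (h c)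
  have h3 : (⋂ c : κ, {x | f x = c}ᶜ) ∈ U := Filter.iInter_mem.mpr h2
  have h4 : (⋂ c : κ, {x | f x = c}ᶜ) = (∅ : Set ℕ) := by
    ext x
    simp only [Set.mem_iInter, Set.mem_compl_iff, Set.mem_setOf_eq, Set.mem_empty_iff_false,
      iff_false, not_forall, not_not]
    exact ⟨f x, rfl⟩
  rw [h4] at h3
  exact absurd h3 (Filter.empty_notMem (U : Filter ℕ))

lemma list_inter_mem (F : ℕ → Set ℕ) :
    ∀ l : List ℕ, (∀ a ∈ l, F a ∈ U) → {x | ∀ a ∈ l, x ∈ F a} ∈ U := by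
  intro l
  induction l with
  | nil =>
    intro _
    have h : {x : ℕ | ∀ a ∈ ([] : List ℕ), x ∈ F a} = Set.univ := by
      ext x; simp
    rw [h]; exact Filter.univ_mem
  | cons a l ih =>
    intro h
    have h1 : F a ∈ U := h a List.mem_cons_self
    have h2 : {x | ∀ b ∈ l, x ∈ F b} ∈ U := ih fun b hb => h b (List.mem_cons_of_mem _ hb)
    have h3 : {x | ∀ b ∈ a :: l, x ∈ F b} = F a ∩ {x | ∀ b ∈ l, x ∈ F b} := by
      ext x; simp [List.forall_mem_cons]
    rw [h3]
    exact Filter.inter_mem h1 h2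

lemma diagonal (hU : (U : Filter ℕ) ≤ cofinite) (P : ℕ → ℕ → ℕ → Prop)
    (hP : ∀ s t, {x | P s t x} ∈ U) :
    ∃ b : ℕ → ℕ, StrictMono b ∧ ∀ i j k, i < j → j < k → P (b i) (b j) (b k) := by
  classical
  have hSU : ∀ h : List ℕ, {x | ∀ s ∈ h, s < x ∧ ∀ t ∈ h, P s t x} ∈ U := by
    intro h
    have heq : {x | ∀ s ∈ h, s < x ∧ ∀ t ∈ h, P s t x}
        = {x | ∀ s ∈ h, x ∈ {y | s < y ∧ ∀ t ∈ h, P s t y}} := rfl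
    rw [heq]
    apply list_inter_mem U _ h
    intro a _
    have h1 : {y : ℕ | a < y} ∈ U := mem_gt U hU a
    have h2 : {y | ∀ t ∈ h, y ∈ {z | P a t z}} ∈ U := list_inter_mem U _ h fun t _ => hP a t
    have h3 : {y | a < y ∧ ∀ t ∈ h, P a t y}
        = {y : ℕ | a < y} ∩ {y | ∀ t ∈ h, y ∈ {z | P a t z}} := rfl
    rw [h3]
    exact Filter.inter_mem h1 h2
  have hne : ∀ h : List ℕ, {x | ∀ s ∈ h, s < x ∧ ∀ t ∈ h, P s t x}.Nonempty :=
    fun h => Ultrafilter.nonempty_of_mem (hSU h)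
  let pick : List ℕ → ℕ := fun h => (hne h).choose
  have hpick : ∀ h : List ℕ, ∀ s ∈ h, s < pick h ∧ ∀ t ∈ h, P s t (pick h) :=
    fun h => (hne h).choose_spec
  let hist : ℕ → List ℕ := fun k => Nat.rec [] (fun _ ih => pick ih :: ih) k
  have hist_succ : ∀ k, hist (k + 1) = pick (hist k) :: hist k := fun _ => rfl
  let b : ℕ → ℕ := fun k => pick (hist k)
  have hmem : ∀ i k, i < k → b i ∈ hist k := by
    intro i k
    induction k with
    | zero => intro h; exact absurd h (Nat.not_lt_zero i)
    | succ k ih =>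
      intro hik
      rw [hist_succ]
      rcases Nat.lt_succ_iff_lt_or_eq.mp hik with h | h
      · exact List.mem_cons_of_mem _ (ih h)
      · subst h; exact List.mem_cons_self
  have hbmono : StrictMono b := by
    apply strictMono_nat_of_lt_succ
    intro k
    have h1 : b k ∈ hist (k + 1) := hmem k (k + 1) (Nat.lt_succ_self k)
    exact (hpick (hist (k + 1)) (b k) h1).1
  refine ⟨b, hbmono, ?_⟩
  intro i j k hij hjk
  have h1 : b i ∈ hist k := hmem i k (hij.trans hjk)
  have h2 : b j ∈ hist k := hmem j k hjk
  exact ((hpick (hist k) (b i) h1).2) (b j) h2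

lemma exists_mono_mem (hU : (U : Filter ℕ) ≤ cofinite) {s : Set ℕ} (hs : s ∈ U) :
    ∃ t : ℕ → ℕ, StrictMono t ∧ ∀ i, t i ∈ s := by
  classical
  have key : ∀ a : ℕ, ∃ b, b ∈ s ∧ a < b := by
    intro a
    obtain ⟨x, hx⟩ := Ultrafilter.nonempty_of_mem (Filter.inter_mem hs (mem_gt U hU a))
    exact ⟨x, hx.1, hx.2⟩
  choose f hf1 hf2 using key
  let t : ℕ → ℕ := fun k => Nat.rec (f 0) (fun _ ih => f ih) k
  have ht : ∀ k, t (k + 1) = f (t k) := fun _ => rfl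
  refine ⟨t, strictMono_nat_of_lt_succ fun k => by rw [ht]; exact hf2 (t k), ?_⟩
  intro i
  cases i with
  | zero => exact hf1 0
  | succ k => rw [ht]; exact hf1 (t k)

lemma ramsey2 (hU : (U : Filter ℕ) ≤ cofinite) {κ : Type} [Fintype κ] (C : ℕ → ℕ → κ) :
    ∃ (g : ℕ → ℕ) (c : κ), StrictMono g ∧ ∀ i j, i < j → C (g i) (g j) = c := by
  classical
  have hD : ∀ s : ℕ, ∃ c, {x | C s x = c} ∈ U := fun s => exists_fiber U (C s)
  choose D hDmem using hD
  obtain ⟨b, hbmono, hb⟩ := diagonal U hU (fun _ t x => C t x = D t) (fun _ t => hDmem t)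
  obtain ⟨c, hc⟩ := exists_fiber U (fun i => D (b (i + 1)))
  obtain ⟨t, htmono, htmem⟩ := exists_mono_mem U hU hc
  refine ⟨fun i => b (t i + 1), c, ?_, ?_⟩
  · intro i j hij
    exact hbmono (by have := htmono hij; omega)
  · intro i j hij
    have h1 : C (b (t i + 1)) (b (t j + 1)) = D (b (t i + 1)) :=
      hb 0 (t i + 1) (t j + 1) (Nat.succ_pos _) (by have := htmono hij; omega)
    rw [h1]
    exact htmem i

lemma ramsey3 (hU : (U : Filter ℕ) ≤ cofinite) {κ : Type} [Fintype κ] (C : ℕ → ℕ → ℕ → κ) :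
    ∃ (g : ℕ → ℕ) (c : κ), StrictMono g ∧ ∀ i j k, i < j → j < k → C (g i) (g j) (g k) = c := by
  classical
  have hD : ∀ s t : ℕ, ∃ c, {x | C s t x = c} ∈ U := fun s t => exists_fiber U (C s t)
  choose D hDmem using hD
  obtain ⟨b, hbmono, hb⟩ := diagonal U hU (fun s t x => C s t x = D s t) (fun s t => hDmem s t)
  obtain ⟨t, c, htmono, ht⟩ := ramsey2 U hU (fun i j => D (b i) (b j))
  refine ⟨fun i => b (t i), c, hbmono.comp htmono, ?_⟩
  intro i j k hij hjk
  have h1 : C (b (t i)) (b (t j)) (b (t k)) = D (b (t i)) (b (t j)) :=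
    hb (t i) (t j) (t k) (htmono hij) (htmono hjk)
  rw [h1]
  exact ht i j hij

end CubicAux

/-- For any real `α` and `ε > 0`, the set `{n : ‖n³α‖ < ε}` is `Δ₂*`: every strictly
increasing sequence in `ℕ` admits `k₁ < k₂ < k₃ < k₄` whose second difference `d` is a
positive integer with `‖d³α‖ < ε`. -/
theorem cubic_is_Delta_two_star (α : ℝ) (ε : ℝ) (hε : 0 < ε) (n : ℕ → ℕ)
    (hmono : StrictMono n) :
    ∃ k₁ k₂ k₃ k₄ : ℕ, k₁ < k₂ ∧ k₂ < k₃ ∧ k₃ < k₄ ∧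
      0 < ((n k₄ : ℤ) - n k₃) - ((n k₂ : ℤ) - n k₁) ∧
      ∃ m : ℤ,
        |(((((n k₄ : ℤ) - n k₃) - ((n k₂ : ℤ) - n k₁)) ^ 3 : ℤ) : ℝ) * α - (m : ℝ)| < ε := by
  classical
  obtain ⟨U, hU⟩ := Ultrafilter.exists_le (cofinite : Filter ℕ)
  set N : ℕ := ⌈(32 : ℝ) / ε⌉₊ + 1 with hNdef
  have hN0 : 0 < N := Nat.succ_pos _
  have hNR : (0 : ℝ) < (N : ℝ) := by exact_mod_cast hN0
  have hNe : (32 : ℝ) / (N : ℝ) < ε := by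
    have h1 : (32 : ℝ) / ε ≤ (⌈(32 : ℝ) / ε⌉₊ : ℝ) := Nat.le_ceil _
    have h2 : ((⌈(32 : ℝ) / ε⌉₊ : ℝ)) < (N : ℝ) := by
      rw [hNdef]; push_cast; linarith
    have h3 : (32 : ℝ) / ε < (N : ℝ) := lt_of_le_of_lt h1 h2
    rw [div_lt_iff₀ hε] at h3
    rw [div_lt_iff₀ hNR]
    nlinarith
  have hboxlt : ∀ y : ℝ, ⌊Int.fract y * (N : ℝ)⌋ < (N : ℤ) := by
    intro y
    apply Int.floor_lt.mpr
    push_cast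
    nlinarith [Int.fract_lt_one y, Int.fract_nonneg y]
  have hbox0 : ∀ y : ℝ, 0 ≤ ⌊Int.fract y * (N : ℝ)⌋ := by
    intro y
    apply Int.floor_nonneg.mpr
    have := Int.fract_nonneg y
    positivity
  set box : ℝ → Fin N := fun y =>
    ⟨(⌊Int.fract y * (N : ℝ)⌋).toNat, by
      have h1 := hboxlt y
      have h2 := hbox0 y
      omega⟩ with hboxdef
  have hboxeq : ∀ y z : ℝ, box y = box z → |Int.fract y - Int.fract z| < 1 / (N : ℝ) := by
    intro y z h
    have h2 := congrArg Fin.val h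
    simp only [hboxdef] at h2
    have h1 : ⌊Int.fract y * (N : ℝ)⌋ = ⌊Int.fract z * (N : ℝ)⌋ := by
      have hy := hbox0 y; have hz := hbox0 z
      omega
    have h3 : |Int.fract y * (N : ℝ) - Int.fract z * (N : ℝ)| < 1 := by
      have hy1 := Int.floor_le (Int.fract y * (N : ℝ))
      have hy2 := Int.lt_floor_add_one (Int.fract y * (N : ℝ))
      have hz1 := Int.floor_le (Int.fract z * (N : ℝ))
      have hz2 := Int.lt_floor_add_one (Int.fract z * (N : ℝ))
      rw [h1] at hy1 hy2
      rw [abs_lt]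
      constructor <;> linarith
    have h4 : |Int.fract y - Int.fract z| * (N : ℝ) < 1 := by
      calc |Int.fract y - Int.fract z| * (N : ℝ)
          = |(Int.fract y - Int.fract z) * (N : ℝ)| := by
            rw [abs_mul, abs_of_pos hNR]
        _ = |Int.fract y * (N : ℝ) - Int.fract z * (N : ℝ)| := by ring_nf
        _ < 1 := h3
    rw [lt_div_iff₀ hNR]
    exact h4
  obtain ⟨g, cstar, hgmono, hH⟩ := CubicAux.ramsey3 U hU
    (fun i j k => (box ((n i : ℝ) * (n j : ℝ) * (n k : ℝ) * α),
                   box ((n i : ℝ) ^ 2 * (n j : ℝ) * α),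
                   box ((n i : ℝ) * (n j : ℝ) ^ 2 * α),
                   box ((n i : ℝ) ^ 3 * α)))
  set J : ℕ := n (g 2) + n (g 1) + 3 with hJdef
  have hJ2 : 2 < J := by omega
  have hmonoN : StrictMono fun i => n (g i) := hmono.comp hgmono
  have hgrow : n (g 2) + n (g 1) < n (g J) := by
    have h1 : J ≤ n (g J) := hmonoN.le_apply
    omega
  -- the eight homogeneous triples we use
  have h012 := hH 0 1 2 (by omega) (by omega)
  have h01J := hH 0 1 J (by omega) (by omega)
  have h02J := hH 0 2 J (by omega) hJ2
  have h12J := hH 1 2 J (by omega) hJ2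
  have h0J1 := hH 0 J (J + 1) (by omega) (by omega)
  have h1J1 := hH 1 J (J + 1) (by omega) (by omega)
  have h2J1 := hH 2 J (J + 1) hJ2 (by omega)
  have hJ12 := hH J (J + 1) (J + 2) (by omega) (by omega)
  -- extract box equalities
  have bD123 : box ((n (g 0) : ℝ) * (n (g 1) : ℝ) * (n (g 2) : ℝ) * α) = cstar.1 :=
    congrArg (fun p => p.1) h012
  have bB12 : box ((n (g 0) : ℝ) ^ 2 * (n (g 1) : ℝ) * α) = cstar.2.1 :=
    congrArg (fun p => p.2.1) h012
  have bC12 : box ((n (g 0) : ℝ) * (n (g 1) : ℝ) ^ 2 * α) = cstar.2.2.1 :=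
    congrArg (fun p => p.2.2.1) h012
  have bA1 : box ((n (g 0) : ℝ) ^ 3 * α) = cstar.2.2.2 :=
    congrArg (fun p => p.2.2.2) h012
  have bD124 : box ((n (g 0) : ℝ) * (n (g 1) : ℝ) * (n (g J) : ℝ) * α) = cstar.1 :=
    congrArg (fun p => p.1) h01J
  have bD134 : box ((n (g 0) : ℝ) * (n (g 2) : ℝ) * (n (g J) : ℝ) * α) = cstar.1 :=
    congrArg (fun p => p.1) h02J
  have bB13 : box ((n (g 0) : ℝ) ^ 2 * (n (g 2) : ℝ) * α) = cstar.2.1 :=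
    congrArg (fun p => p.2.1) h02J
  have bC13 : box ((n (g 0) : ℝ) * (n (g 2) : ℝ) ^ 2 * α) = cstar.2.2.1 :=
    congrArg (fun p => p.2.2.1) h02J
  have bD234 : box ((n (g 1) : ℝ) * (n (g 2) : ℝ) * (n (g J) : ℝ) * α) = cstar.1 :=
    congrArg (fun p => p.1) h12J
  have bB23 : box ((n (g 1) : ℝ) ^ 2 * (n (g 2) : ℝ) * α) = cstar.2.1 :=
    congrArg (fun p => p.2.1) h12J
  have bC23 : box ((n (g 1) : ℝ) * (n (g 2) : ℝ) ^ 2 * α) = cstar.2.2.1 :=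
    congrArg (fun p => p.2.2.1) h12J
  have bA2 : box ((n (g 1) : ℝ) ^ 3 * α) = cstar.2.2.2 :=
    congrArg (fun p => p.2.2.2) h12J
  have bB14 : box ((n (g 0) : ℝ) ^ 2 * (n (g J) : ℝ) * α) = cstar.2.1 :=
    congrArg (fun p => p.2.1) h0J1
  have bC14 : box ((n (g 0) : ℝ) * (n (g J) : ℝ) ^ 2 * α) = cstar.2.2.1 :=
    congrArg (fun p => p.2.2.1) h0J1
  have bB24 : box ((n (g 1) : ℝ) ^ 2 * (n (g J) : ℝ) * α) = cstar.2.1 :=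
    congrArg (fun p => p.2.1) h1J1
  have bC24 : box ((n (g 1) : ℝ) * (n (g J) : ℝ) ^ 2 * α) = cstar.2.2.1 :=
    congrArg (fun p => p.2.2.1) h1J1
  have bB34 : box ((n (g 2) : ℝ) ^ 2 * (n (g J) : ℝ) * α) = cstar.2.1 :=
    congrArg (fun p => p.2.1) h2J1
  have bC34 : box ((n (g 2) : ℝ) * (n (g J) : ℝ) ^ 2 * α) = cstar.2.2.1 :=
    congrArg (fun p => p.2.2.1) h2J1
  have bA3 : box ((n (g 2) : ℝ) ^ 3 * α) = cstar.2.2.2 :=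
    congrArg (fun p => p.2.2.2) h2J1
  have bA4 : box ((n (g J) : ℝ) ^ 3 * α) = cstar.2.2.2 :=
    congrArg (fun p => p.2.2.2) hJ12
  -- fract closeness
  have hd1 := hboxeq _ _ (bA1.trans bA2.symm)
  have hd2 := hboxeq _ _ (bA4.trans bA3.symm)
  have hd3 := hboxeq _ _ (bB14.trans bB12.symm)
  have hd4 := hboxeq _ _ (bB24.trans bB13.symm)
  have hd5 := hboxeq _ _ (bB34.trans bB23.symm)
  have hd6 := hboxeq _ _ (bC12.trans bC23.symm)
  have hd7 := hboxeq _ _ (bC13.trans bC24.symm)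
  have hd8 := hboxeq _ _ (bC14.trans bC34.symm)
  have hd9 := hboxeq _ _ (bD123.trans bD124.symm)
  have hd10 := hboxeq _ _ (bD234.trans bD134.symm)
  refine ⟨g 0, g 1, g 2, g J, hgmono (by omega), hgmono (by omega), hgmono hJ2, by omega, ?_⟩
  refine ⟨⌊(n (g 0) : ℝ) ^ 3 * α⌋ - ⌊(n (g 1) : ℝ) ^ 3 * α⌋ - ⌊(n (g 2) : ℝ) ^ 3 * α⌋
      + ⌊(n (g J) : ℝ) ^ 3 * α⌋
      - 3 * ⌊(n (g 0) : ℝ) ^ 2 * (n (g 1) : ℝ) * α⌋ - 3 * ⌊(n (g 0) : ℝ) ^ 2 * (n (g 2) : ℝ) * α⌋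
      + 3 * ⌊(n (g 0) : ℝ) ^ 2 * (n (g J) : ℝ) * α⌋ - 3 * ⌊(n (g 1) : ℝ) ^ 2 * (n (g 2) : ℝ) * α⌋
      + 3 * ⌊(n (g 1) : ℝ) ^ 2 * (n (g J) : ℝ) * α⌋ + 3 * ⌊(n (g 2) : ℝ) ^ 2 * (n (g J) : ℝ) * α⌋
      + 3 * ⌊(n (g 0) : ℝ) * (n (g 1) : ℝ) ^ 2 * α⌋ + 3 * ⌊(n (g 0) : ℝ) * (n (g 2) : ℝ) ^ 2 * α⌋
      + 3 * ⌊(n (g 0) : ℝ) * (n (g J) : ℝ) ^ 2 * α⌋ - 3 * ⌊(n (g 1) : ℝ) * (n (g 2) : ℝ) ^ 2 * α⌋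
      - 3 * ⌊(n (g 1) : ℝ) * (n (g J) : ℝ) ^ 2 * α⌋ - 3 * ⌊(n (g 2) : ℝ) * (n (g J) : ℝ) ^ 2 * α⌋
      + 6 * ⌊(n (g 0) : ℝ) * (n (g 1) : ℝ) * (n (g 2) : ℝ) * α⌋
      - 6 * ⌊(n (g 0) : ℝ) * (n (g 1) : ℝ) * (n (g J) : ℝ) * α⌋
      - 6 * ⌊(n (g 0) : ℝ) * (n (g 2) : ℝ) * (n (g J) : ℝ) * α⌋
      + 6 * ⌊(n (g 1) : ℝ) * (n (g 2) : ℝ) * (n (g J) : ℝ) * α⌋, ?_⟩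
  have hkey : (((((n (g J) : ℤ) - n (g 2)) - ((n (g 1) : ℤ) - n (g 0))) ^ 3 : ℤ) : ℝ) * α
      - ((⌊(n (g 0) : ℝ) ^ 3 * α⌋ - ⌊(n (g 1) : ℝ) ^ 3 * α⌋ - ⌊(n (g 2) : ℝ) ^ 3 * α⌋
      + ⌊(n (g J) : ℝ) ^ 3 * α⌋
      - 3 * ⌊(n (g 0) : ℝ) ^ 2 * (n (g 1) : ℝ) * α⌋ - 3 * ⌊(n (g 0) : ℝ) ^ 2 * (n (g 2) : ℝ) * α⌋
      + 3 * ⌊(n (g 0) : ℝ) ^ 2 * (n (g J) : ℝ) * α⌋ - 3 * ⌊(n (g 1) : ℝ) ^ 2 * (n (g 2) : ℝ) * α⌋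
      + 3 * ⌊(n (g 1) : ℝ) ^ 2 * (n (g J) : ℝ) * α⌋ + 3 * ⌊(n (g 2) : ℝ) ^ 2 * (n (g J) : ℝ) * α⌋
      + 3 * ⌊(n (g 0) : ℝ) * (n (g 1) : ℝ) ^ 2 * α⌋ + 3 * ⌊(n (g 0) : ℝ) * (n (g 2) : ℝ) ^ 2 * α⌋
      + 3 * ⌊(n (g 0) : ℝ) * (n (g J) : ℝ) ^ 2 * α⌋ - 3 * ⌊(n (g 1) : ℝ) * (n (g 2) : ℝ) ^ 2 * α⌋
      - 3 * ⌊(n (g 1) : ℝ) * (n (g J) : ℝ) ^ 2 * α⌋ - 3 * ⌊(n (g 2) : ℝ) * (n (g J) : ℝ) ^ 2 * α⌋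
      + 6 * ⌊(n (g 0) : ℝ) * (n (g 1) : ℝ) * (n (g 2) : ℝ) * α⌋
      - 6 * ⌊(n (g 0) : ℝ) * (n (g 1) : ℝ) * (n (g J) : ℝ) * α⌋
      - 6 * ⌊(n (g 0) : ℝ) * (n (g 2) : ℝ) * (n (g J) : ℝ) * α⌋
      + 6 * ⌊(n (g 1) : ℝ) * (n (g 2) : ℝ) * (n (g J) : ℝ) * α⌋ : ℤ) : ℝ)
      = (Int.fract ((n (g 0) : ℝ) ^ 3 * α) - Int.fract ((n (g 1) : ℝ) ^ 3 * α))
      + (Int.fract ((n (g J) : ℝ) ^ 3 * α) - Int.fract ((n (g 2) : ℝ) ^ 3 * α))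
      + 3 * ((Int.fract ((n (g 0) : ℝ) ^ 2 * (n (g J) : ℝ) * α)
              - Int.fract ((n (g 0) : ℝ) ^ 2 * (n (g 1) : ℝ) * α))
           + (Int.fract ((n (g 1) : ℝ) ^ 2 * (n (g J) : ℝ) * α)
              - Int.fract ((n (g 0) : ℝ) ^ 2 * (n (g 2) : ℝ) * α))
           + (Int.fract ((n (g 2) : ℝ) ^ 2 * (n (g J) : ℝ) * α)
              - Int.fract ((n (g 1) : ℝ) ^ 2 * (n (g 2) : ℝ) * α)))
      + 3 * ((Int.fract ((n (g 0) : ℝ) * (n (g 1) : ℝ) ^ 2 * α)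
              - Int.fract ((n (g 1) : ℝ) * (n (g 2) : ℝ) ^ 2 * α))
           + (Int.fract ((n (g 0) : ℝ) * (n (g 2) : ℝ) ^ 2 * α)
              - Int.fract ((n (g 1) : ℝ) * (n (g J) : ℝ) ^ 2 * α))
           + (Int.fract ((n (g 0) : ℝ) * (n (g J) : ℝ) ^ 2 * α)
              - Int.fract ((n (g 2) : ℝ) * (n (g J) : ℝ) ^ 2 * α)))
      + 6 * ((Int.fract ((n (g 0) : ℝ) * (n (g 1) : ℝ) * (n (g 2) : ℝ) * α)
              - Int.fract ((n (g 0) : ℝ) * (n (g 1) : ℝ) * (n (g J) : ℝ) * α))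
           + (Int.fract ((n (g 1) : ℝ) * (n (g 2) : ℝ) * (n (g J) : ℝ) * α)
              - Int.fract ((n (g 0) : ℝ) * (n (g 2) : ℝ) * (n (g J) : ℝ) * α))) := by
    simp only [← Int.self_sub_floor]
    push_cast
    ring
  rw [hkey]
  have e1 := abs_lt.mp hd1
  have e2 := abs_lt.mp hd2
  have e3 := abs_lt.mp hd3
  have e4 := abs_lt.mp hd4
  have e5 := abs_lt.mp hd5
  have e6 := abs_lt.mp hd6
  have e7 := abs_lt.mp hd7
  have e8 := abs_lt.mp hd8
  have e9 := abs_lt.mp hd9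
  have e10 := abs_lt.mp hd10
  have h32 : (32 : ℝ) / (N : ℝ) = 32 * (1 / (N : ℝ)) := by ring
  rw [abs_lt]
  constructor
  · linarith [e1.1, e2.1, e3.1, e4.1, e5.1, e6.1, e7.1, e8.1, e9.1, e10.1, hNe, h32]
  · linarith [e1.2, e2.2, e3.2, e4.2, e5.2, e6.2, e7.2, e8.2, e9.2, e10.2, hNe, h32]
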